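/- Let D = diag(d₁,…,d_m) with d₁ > d₂ > … > d_m > 0 and let ζ(x) be an m×m skew-Hermitian matrix function on [0,∞) with ‖ζ(x)‖ ≤ M₀ for all x ≥ 0; let w(x,z) be the fundamental solution of w_x = (izD − ζ(x)) w, w(0,z) = I_m. Fix 1 ≤ k < m and let M_k > 2M₀/(d_k − d_{k+1}). Let 𝒬 be an m×(m−k) matrix with 𝒬*𝒬 > 0 and 𝒬* J_k 𝒬 ≤ 0, where J_k = diag(I_k, −I_{m−k}). Then for all x ≥ 0 and all z with Im z < −M_k, the (m−k)×(m−k) matrix [0 I_{m−k}] w(x,z)^{-1} 𝒬 is invertible, so that ψ_k(x,z) := [I_k 0] w(x,z)^{-1} 𝒬 ([0 I_{m−k}] w(x,z)^{-1} 𝒬)^{-1} is well-defined, and ψ_k(x,z)* ψ_k(x,z) ≤ I_{m−k}; equivalently, [ψ_k(x,z)* I_{m−k}] J_k [ψ_k(x,z); I_{m−k}] ≤ 0. -/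

import Mathlib

open Matrix Set
open scoped Matrix.Norms.L2Operator ComplexOrder

/-- `J_k = diag(I_k, −I_{m−k})`. -/
noncomputable def Jk (m k : ℕ) : Matrix (Fin m) (Fin m) ℂ :=
  Matrix.diagonal fun i => if (i : ℕ) < k then 1 else -1

/-- The block column `[ψ; I_{m−k}]`. -/
noncomputable def colExt {m k : ℕ} (ψ : Matrix (Fin k) (Fin (m - k)) ℂ) :
    Matrix (Fin m) (Fin (m - k)) ℂ :=
  Matrix.of fun i j =>
    if h : (i : ℕ) < k then ψ ⟨i, h⟩ j else if (i : ℕ) = k + (j : ℕ) then 1 else 0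

/-- The embedding `Fin (m−k) → Fin m`, `i ↦ k + i`, selecting the lower rows. -/
def lowEmb {m : ℕ} (k : ℕ) (i : Fin (m - k)) : Fin m :=
  ⟨k + i.1, by have := i.isLt; omega⟩

lemma sum_split {M : Type*} [AddCommMonoid M] {m k : ℕ} (hk : k ≤ m) (f : Fin m → M) :
    ∑ i, f i = (∑ i : Fin k, f (Fin.castLE hk i)) + ∑ j : Fin (m - k), f (lowEmb k j) := by
  rw [← (finSumFinEquiv.trans (finCongr (show k + (m - k) = m by omega))).sum_comp f,
    Fintype.sum_sum_type]
  exact congrArg₂ (· + ·)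
    (Finset.sum_congr rfl fun i _ => congrArg f (by ext; simp))
    (Finset.sum_congr rfl fun j _ => congrArg f (by ext; simp [lowEmb]))

noncomputable def nsq {m : ℕ} (v : Fin m → ℂ) : ℝ := ∑ i, Complex.normSq (v i)

lemma nsq_nonneg {m : ℕ} (v : Fin m → ℂ) : 0 ≤ nsq v :=
  Finset.sum_nonneg fun i _ => Complex.normSq_nonneg _

lemma nsq_eq_zero {m : ℕ} {v : Fin m → ℂ} (h : nsq v ≤ 0) : v = 0 := by
  funext i
  have h2 : ∀ j ∈ Finset.univ, (0:ℝ) ≤ Complex.normSq (v j) :=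
    fun j _ => Complex.normSq_nonneg _
  have := (Finset.sum_eq_zero_iff_of_nonneg h2).1 (le_antisymm h (nsq_nonneg v)) i (Finset.mem_univ i)
  simpa using Complex.normSq_eq_zero.1 this

lemma dot_star_self {m : ℕ} (v : Fin m → ℂ) :
    star v ⬝ᵥ v = (nsq v : ℂ) := by
  simp [dotProduct, nsq, Complex.normSq_eq_conj_mul_self]

lemma Jk_dot {m k : ℕ} (v : Fin m → ℂ) :
    star v ⬝ᵥ (Jk m k *ᵥ v) =
      ((∑ i : Fin m, (if (i:ℕ) < k then (1:ℝ) else -1) * Complex.normSq (v i) : ℝ) : ℂ) := by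
  push_cast
  refine Finset.sum_congr rfl fun i _ => ?_
  simp only [Pi.star_apply, Jk, mulVec_diagonal]
  rw [Complex.normSq_eq_conj_mul_self]
  split <;> simp [Complex.star_def] <;> ring

lemma JkD_dot {m k : ℕ} (d : Fin m → ℝ) (v : Fin m → ℂ) :
    star v ⬝ᵥ (Jk m k *ᵥ ((Matrix.diagonal fun p => (d p : ℂ)) *ᵥ v)) =
      ((∑ i : Fin m, (if (i:ℕ) < k then (1:ℝ) else -1) * d i * Complex.normSq (v i) : ℝ) : ℂ) := by
  push_cast
  refine Finset.sum_congr rfl fun i _ => ?_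
  simp only [Pi.star_apply, Jk, mulVec_diagonal]
  rw [Complex.normSq_eq_conj_mul_self]
  split <;> simp [Complex.star_def] <;> ring

lemma conj_dot {m : ℕ} (a b : Fin m → ℂ) :
    (starRingEnd ℂ) (star a ⬝ᵥ b) = star b ⬝ᵥ a := by
  simp [dotProduct, map_sum, Complex.star_def, mul_comm]

lemma hasDerivWithinAt_qform {m : ℕ} (B : Matrix (Fin m) (Fin m) ℂ)
    {y : ℝ → Fin m → ℂ} {y' : Fin m → ℂ} {s : Set ℝ} {x : ℝ}
    (hy : ∀ i, HasDerivWithinAt (fun t => y t i) (y' i) s x) :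
    HasDerivWithinAt (fun t => (star (y t) ⬝ᵥ (B *ᵥ y t)).re)
      ((star y' ⬝ᵥ (B *ᵥ y x) + star (y x) ⬝ᵥ (B *ᵥ y')).re) s x := by
  have hF : HasDerivWithinAt (fun t => star (y t) ⬝ᵥ (B *ᵥ y t))
      (star y' ⬝ᵥ (B *ᵥ y x) + star (y x) ⬝ᵥ (B *ᵥ y')) s x := by
    have h1 : ∀ t, star (y t) ⬝ᵥ (B *ᵥ y t) = ∑ i, ∑ j, star (y t i) * (B i j * y t j) := by
      intro t; simp [dotProduct, mulVec, Finset.mul_sum]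
    have h2 : star y' ⬝ᵥ (B *ᵥ y x) + star (y x) ⬝ᵥ (B *ᵥ y')
        = ∑ i, ∑ j, (star (y' i) * (B i j * y x j) + star (y x i) * (B i j * y' j)) := by
      simp [dotProduct, mulVec, Finset.mul_sum, Finset.sum_add_distrib]
    simp only [h1, h2]
    refine HasDerivWithinAt.fun_sum fun i _ => ?_
    refine HasDerivWithinAt.fun_sum fun j _ => ?_
    exact ((hy i).star).mul (((hy j)).const_mul (B i j))
  exact (Complex.reCLM.hasFDerivAt.comp_hasDerivWithinAt x hF :)

lemma dot_J_comm {m k : ℕ} (y w : Fin m → ℂ) :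
    star y ⬝ᵥ (Jk m k *ᵥ w) = star (Jk m k *ᵥ y) ⬝ᵥ w := by
  refine Finset.sum_congr rfl fun i _ => ?_
  simp only [Pi.star_apply, Jk, mulVec_diagonal, Complex.star_def]
  split <;> simp <;> ring

lemma euclid_norm_sq {m : ℕ} (y : Fin m → ℂ) :
    ‖(WithLp.equiv 2 (Fin m → ℂ)).symm y‖ * ‖(WithLp.equiv 2 (Fin m → ℂ)).symm y‖ = nsq y := by
  rw [EuclideanSpace.norm_eq]
  rw [Real.mul_self_sqrt (Finset.sum_nonneg fun i _ => sq_nonneg _)]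
  refine Finset.sum_congr rfl fun i _ => ?_
  simp [nsq, Complex.sq_norm]

lemma re_dot_J_zeta_le {m k : ℕ} (ζ : Matrix (Fin m) (Fin m) ℂ) (M₀ : ℝ) (hM₀ : 0 ≤ M₀)
    (hζ : ‖ζ‖ ≤ M₀) (y : Fin m → ℂ) :
    (star y ⬝ᵥ (Jk m k *ᵥ (ζ *ᵥ y))).re ≤ M₀ * nsq y := by
  rw [dot_J_comm]
  set Y : EuclideanSpace ℂ (Fin m) := (WithLp.equiv 2 (Fin m → ℂ)).symm (Jk m k *ᵥ y) with hYdef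
  set Z : EuclideanSpace ℂ (Fin m) := (WithLp.equiv 2 (Fin m → ℂ)).symm (ζ *ᵥ y) with hZdef
  set ey : EuclideanSpace ℂ (Fin m) := (WithLp.equiv 2 (Fin m → ℂ)).symm y with heydef
  have hinner : (inner ℂ Y Z : ℂ) = star (Jk m k *ᵥ y) ⬝ᵥ (ζ *ᵥ y) :=
    (EuclideanSpace.inner_eq_star_dotProduct Y Z).trans (dotProduct_comm _ _)
  have h1 : (star (Jk m k *ᵥ y) ⬝ᵥ (ζ *ᵥ y)).re ≤ ‖(inner ℂ Y Z : ℂ)‖ := by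
    rw [hinner]
    exact (le_abs_self _).trans (Complex.abs_re_le_norm _)
  have h2 : ‖(inner ℂ Y Z : ℂ)‖ ≤ ‖Y‖ * ‖Z‖ := norm_inner_le_norm Y Z
  have hY : ‖Y‖ = ‖ey‖ := by
    simp only [EuclideanSpace.norm_eq]
    congr 1
    refine Finset.sum_congr rfl fun i _ => ?_
    show ‖(Jk m k *ᵥ y) i‖ ^ 2 = ‖y i‖ ^ 2
    simp only [Jk, mulVec_diagonal]
    split <;> simp
  have hZ : ‖Z‖ ≤ ‖ζ‖ * ‖ey‖ := Matrix.l2_opNorm_mulVec ζ ey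
  have hZ' : ‖Z‖ ≤ M₀ * ‖ey‖ :=
    hZ.trans (mul_le_mul_of_nonneg_right hζ (norm_nonneg _))
  calc (star (Jk m k *ᵥ y) ⬝ᵥ (ζ *ᵥ y)).re ≤ ‖Y‖ * ‖Z‖ := h1.trans h2
    _ ≤ ‖ey‖ * (M₀ * ‖ey‖) := by
        rw [hY]; exact mul_le_mul_of_nonneg_left hZ' (norm_nonneg _)
    _ = M₀ * nsq y := by rw [← euclid_norm_sq y]; ring

lemma Jk_herm {m k : ℕ} : (Jk m k)ᴴ = Jk m k := by
  ext i j
  simp only [Jk, Matrix.conjTranspose_apply, Matrix.diagonal_apply]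
  rcases eq_or_ne i j with rfl | h
  · simp only [if_pos rfl]
    split_ifs <;> simp
  · simp [h, h.symm]

lemma uJu_split {m k : ℕ} (hk : k ≤ m) (u : Matrix (Fin m) (Fin (m - k)) ℂ) :
    uᴴ * Jk m k * u =
      (u.submatrix (Fin.castLE hk) id)ᴴ * u.submatrix (Fin.castLE hk) id -
      (u.submatrix (lowEmb k) id)ᴴ * u.submatrix (lowEmb k) id := by
  ext s t
  rw [Matrix.mul_assoc, Matrix.mul_apply]
  rw [sum_split hk (f := fun i => uᴴ s i * (Jk m k * u) i t)]
  have h1 : ∀ i : Fin k, (Jk m k * u) (Fin.castLE hk i) t = u (Fin.castLE hk i) t := by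
    intro i
    have : ((Fin.castLE hk i : Fin m) : ℕ) < k := i.isLt
    simp [Jk, Matrix.diagonal_mul, this]
  have h2 : ∀ j : Fin (m - k), (Jk m k * u) (lowEmb k j) t = -u (lowEmb k j) t := by
    intro j
    have : ¬ ((lowEmb k j : Fin m) : ℕ) < k := by simp [lowEmb]
    simp [Jk, Matrix.diagonal_mul, this]
  simp only [h1, h2, mul_neg, Matrix.conjTranspose_apply, Matrix.sub_apply, Matrix.mul_apply,
    Matrix.submatrix_apply, id, Finset.sum_neg_distrib]
  ring

lemma colExt_J {m k : ℕ} (hk : k < m) (ψ : Matrix (Fin k) (Fin (m - k)) ℂ) :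
    (colExt ψ)ᴴ * Jk m k * colExt ψ = ψᴴ * ψ - 1 := by
  ext s t
  rw [Matrix.mul_assoc, Matrix.mul_apply]
  rw [sum_split hk.le (f := fun i => (colExt ψ)ᴴ s i * (Jk m k * colExt ψ) i t)]
  have hc1 : ∀ (i : Fin k) (r : Fin (m - k)), colExt ψ (Fin.castLE hk.le i) r = ψ i r := by
    intro i r
    have : ((Fin.castLE hk.le i : Fin m) : ℕ) < k := i.isLt
    simp [colExt, this]
  have hc2 : ∀ (j : Fin (m - k)) (r : Fin (m - k)),
      colExt ψ (lowEmb k j) r = if j = r then 1 else 0 := by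
    intro j r
    have h : ¬ ((lowEmb k j : Fin m) : ℕ) < k := by simp [lowEmb]
    simp only [colExt, Matrix.of_apply, dif_neg h, lowEmb]
    simp [Fin.ext_iff]
  have h1 : ∀ i : Fin k, (Jk m k * colExt ψ) (Fin.castLE hk.le i) t = ψ i t := by
    intro i
    have : ((Fin.castLE hk.le i : Fin m) : ℕ) < k := i.isLt
    simp [Jk, Matrix.diagonal_mul, this, hc1]
  have h2 : ∀ j : Fin (m - k),
      (Jk m k * colExt ψ) (lowEmb k j) t = -(if j = t then 1 else 0) := by
    intro j
    have h : ¬ ((lowEmb k j : Fin m) : ℕ) < k := by simp [lowEmb]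
    simp [Jk, Matrix.diagonal_mul, h, hc2]
    split <;> simp
  simp only [Matrix.conjTranspose_apply, h1, h2, hc1, hc2, Matrix.sub_apply, Matrix.mul_apply,
    Matrix.one_apply]
  have hsum : ∑ j : Fin (m - k), star (if j = s then (1:ℂ) else 0) * -(if j = t then 1 else 0)
      = -(if s = t then (1:ℂ) else 0) := by
    have hterm : ∀ j : Fin (m - k),
        star (if j = s then (1:ℂ) else 0) * -(if j = t then 1 else 0)
          = -((if j = s then (1:ℂ) else 0) * (if j = t then 1 else 0)) := by
      intro j; split_ifs <;> simp
    simp only [hterm, Finset.sum_neg_distrib]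
    congr 1
    simp [ite_mul, Finset.sum_ite_eq', eq_comm]
  rw [hsum]
  ring

lemma D_dot {m : ℕ} (d : Fin m → ℝ) (v : Fin m → ℂ) :
    star v ⬝ᵥ ((Matrix.diagonal fun p => (d p : ℂ)) *ᵥ v) =
      ((∑ i : Fin m, d i * Complex.normSq (v i) : ℝ) : ℂ) := by
  push_cast
  refine Finset.sum_congr rfl fun i _ => ?_
  simp only [Pi.star_apply, mulVec_diagonal]
  rw [Complex.normSq_eq_conj_mul_self]
  simp [Complex.star_def]; ring

lemma dot_conjT_mulVec {p q : ℕ} (M : Matrix (Fin p) (Fin q) ℂ) (v : Fin q → ℂ) (w : Fin p → ℂ) :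
    star v ⬝ᵥ (Mᴴ *ᵥ w) = star (M *ᵥ v) ⬝ᵥ w := by
  rw [Matrix.dotProduct_mulVec, ← Matrix.star_mulVec]

lemma submatrix_row_mulVec {p q r : ℕ} (M : Matrix (Fin p) (Fin q) ℂ) (f : Fin r → Fin p)
    (v : Fin q → ℂ) : (M.submatrix f id) *ᵥ v = fun j => (M *ᵥ v) (f j) := by
  funext j; simp [Matrix.mulVec, dotProduct]

lemma mono_help {g g' : ℝ → ℝ} (hg : ∀ x ∈ Ici (0:ℝ), HasDerivWithinAt g (g' x) (Ici 0) x)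
    (hg' : ∀ x ∈ Ici (0:ℝ), 0 ≤ g' x) : MonotoneOn g (Ici 0) := by
  refine monotoneOn_of_hasDerivWithinAt_nonneg (f' := g') (convex_Ici 0)
    (fun x hx => (hg x hx).continuousWithinAt) (fun x hx => ?_) (fun x hx => ?_)
  · exact (hg x (interior_subset hx)).mono interior_subset
  · exact hg' x (interior_subset hx)

lemma re_eq_zero_of_conj_neg {t : ℂ} (h : (starRingEnd ℂ) t = -t) : t.re = 0 := by
  have := congrArg Complex.re h
  simp only [Complex.conj_re, Complex.neg_re] at this
  linarith



set_option maxHeartbeats 1000000 in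
/-- well-definedness and contractivity of `ψ_k(x,z)`, cf. (NW13) and
(NW14).  For the system `w_x = (izD − ζ(x))w` with `D` diagonal, strictly decreasing and
positive, `ζ` skew-Hermitian with `‖ζ(x)‖ ≤ M₀`, for `M_k > 2M₀/(d_k − d_{k+1})` and any
nonsingular `𝒬` with property-`J_k` (`𝒬*𝒬 > 0`, `𝒬*J_k𝒬 ≤ 0`), the matrix
`[0 I] w(x,z)⁻¹ 𝒬` is invertible for `x ≥ 0`, `Im z < −M_k`, and
`ψ_k := [I 0] w⁻¹𝒬 ([0 I] w⁻¹𝒬)⁻¹` satisfies `ψ_k*ψ_k ≤ I`, equivalently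
`[ψ_k* I] J_k [ψ_k; I] ≤ 0`. -/
theorem psi_k_well_defined_and_contractive {m : ℕ}
    (d : Fin m → ℝ) (hd : StrictAnti d) (hdpos : ∀ i, 0 < d i)
    (M₀ : ℝ) (hM₀ : 0 < M₀)
    (ζ : ℝ → Matrix (Fin m) (Fin m) ℂ)
    (hζsk : ∀ x ∈ Ici (0:ℝ), (ζ x)ᴴ = -ζ x)
    (hζbdd : ∀ x ∈ Ici (0:ℝ), ‖ζ x‖ ≤ M₀)
    (w : ℝ → ℂ → Matrix (Fin m) (Fin m) ℂ)
    (hw0 : ∀ z : ℂ, w 0 z = 1)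
    (hwx : ∀ z : ℂ, ∀ x ∈ Ici (0:ℝ), ∀ i j,
      HasDerivWithinAt (fun y => w y z i j)
        ((((Complex.I * z) • Matrix.diagonal (fun p => (d p : ℂ)) - ζ x) * w x z) i j)
        (Ici (0:ℝ)) x)
    (k : ℕ) (hk1 : 1 ≤ k) (hk : k < m)
    (Mk : ℝ) (hMk : Mk > 2 * M₀ / (d ⟨k - 1, by omega⟩ - d ⟨k, hk⟩))
    (Q : Matrix (Fin m) (Fin (m - k)) ℂ)
    (hQ1 : (Qᴴ * Q).PosDef) (hQ2 : (-(Qᴴ * Jk m k * Q)).PosSemidef) :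
    ∀ x ∈ Ici (0:ℝ), ∀ z : ℂ, z.im < -Mk →
      IsUnit (((w x z)⁻¹ * Q).submatrix (lowEmb k) id) ∧
      ((1 : Matrix (Fin (m - k)) (Fin (m - k)) ℂ) -
        (((w x z)⁻¹ * Q).submatrix (Fin.castLE hk.le) id *
          (((w x z)⁻¹ * Q).submatrix (lowEmb k) id)⁻¹)ᴴ *
        (((w x z)⁻¹ * Q).submatrix (Fin.castLE hk.le) id *
          (((w x z)⁻¹ * Q).submatrix (lowEmb k) id)⁻¹)).PosSemidef ∧
      (-((colExt (((w x z)⁻¹ * Q).submatrix (Fin.castLE hk.le) id *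
            (((w x z)⁻¹ * Q).submatrix (lowEmb k) id)⁻¹))ᴴ * Jk m k *
          colExt (((w x z)⁻¹ * Q).submatrix (Fin.castLE hk.le) id *
            (((w x z)⁻¹ * Q).submatrix (lowEmb k) id)⁻¹))).PosSemidef := by
  intro x₀ hx₀ z hz
  have hαβ : (0:ℝ) < d ⟨k - 1, by omega⟩ - d ⟨k, hk⟩ :=
    sub_pos.2 (hd (by rw [Fin.mk_lt_mk]; omega))
  have hMkpos : (0:ℝ) < Mk := lt_trans (div_pos (by positivity) hαβ) hMk
  have hηneg : z.im < 0 := lt_trans hz (by linarith)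
  set D : Matrix (Fin m) (Fin m) ℂ := Matrix.diagonal fun p => (d p : ℂ) with hD
  set A : ℝ → Matrix (Fin m) (Fin m) ℂ := fun x => (Complex.I * z) • D - ζ x with hA
  -- derivative of solutions with fixed initial vector
  have hyder : ∀ (c : Fin m → ℂ), ∀ x ∈ Ici (0:ℝ), ∀ i,
      HasDerivWithinAt (fun t => (w t z *ᵥ c) i) ((A x *ᵥ (w x z *ᵥ c)) i) (Ici 0) x := by
    intro c x hx i
    have h1 : (A x *ᵥ (w x z *ᵥ c)) i = ∑ j, ((A x * w x z) i j) * c j := by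
      rw [Matrix.mulVec_mulVec]; rfl
    have h2 : ∀ t, (w t z *ᵥ c) i = ∑ j, w t z i j * c j := fun t => rfl
    rw [h1]
    simp only [h2]
    exact HasDerivWithinAt.fun_sum fun j _ => (hwx z x hx i j).mul_const (c j)
  -- invertibility of w x₀ z
  have hwdet : IsUnit (w x₀ z).det := by
    rw [isUnit_iff_ne_zero]
    intro hdet0
    obtain ⟨c, hc0, hcz⟩ := (Matrix.exists_mulVec_eq_zero_iff).2 hdet0
    have hfmono : MonotoneOn
        (fun t => (star (w t z *ᵥ c) ⬝ᵥ ((1 : Matrix (Fin m) (Fin m) ℂ) *ᵥ (w t z *ᵥ c))).re)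
        (Ici 0) := by
      refine mono_help (g' := fun x =>
          (star (A x *ᵥ (w x z *ᵥ c)) ⬝ᵥ ((1 : Matrix (Fin m) (Fin m) ℂ) *ᵥ (w x z *ᵥ c))
            + star (w x z *ᵥ c) ⬝ᵥ ((1 : Matrix (Fin m) (Fin m) ℂ) *ᵥ (A x *ᵥ (w x z *ᵥ c)))).re)
        (fun x hx => hasDerivWithinAt_qform 1 (hyder c x hx)) ?_
      intro x hx
      simp only [Matrix.one_mulVec]
      set y := w x z *ᵥ c with hy
      set T := star y ⬝ᵥ (A x *ᵥ y) with hT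
      have h1 : star (A x *ᵥ y) ⬝ᵥ y = (starRingEnd ℂ) T := by
        rw [hT, conj_dot]
      rw [h1, Complex.add_re, Complex.conj_re]
      have hskew : (starRingEnd ℂ) (star y ⬝ᵥ (ζ x *ᵥ y)) = -(star y ⬝ᵥ (ζ x *ᵥ y)) := by
        rw [conj_dot, Matrix.star_mulVec, ← Matrix.dotProduct_mulVec, hζsk x hx,
          Matrix.neg_mulVec, dotProduct_neg]
      have hTre : T.re = (∑ i, d i * Complex.normSq (y i)) * (-z.im) := by
        rw [hT, hA]
        simp only []
        rw [Matrix.sub_mulVec, dotProduct_sub, smul_mulVec,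
          dotProduct_smul, hD, D_dot d y, Complex.sub_re,
          re_eq_zero_of_conj_neg hskew]
        simp [Complex.mul_re]
        ring
      have hS : 0 ≤ ∑ i, d i * Complex.normSq (y i) :=
        Finset.sum_nonneg fun i _ => mul_nonneg (hdpos i).le (Complex.normSq_nonneg _)
      have : 0 ≤ T.re := by
        rw [hTre]
        exact mul_nonneg hS (by linarith)
      linarith
    have hle := hfmono (self_mem_Ici) hx₀ hx₀
    simp only [hw0, Matrix.one_mulVec, hcz] at hle
    rw [dot_star_self] at hle
    simp only [Complex.ofReal_re] at hle
    have hc00 : c = 0 := nsq_eq_zero (by simpa using hle)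
    exact hc0 hc00
  set u : Matrix (Fin m) (Fin (m - k)) ℂ := (w x₀ z)⁻¹ * Q with hu
  have hwu : w x₀ z * u = Q := by
    rw [hu, ← Matrix.mul_assoc, Matrix.mul_nonsing_inv _ hwdet, Matrix.one_mul]
  -- key contraction estimate
  have key : ∀ v : Fin (m - k) → ℂ, (star (u *ᵥ v) ⬝ᵥ (Jk m k *ᵥ (u *ᵥ v))).re ≤ 0 := by
    intro v
    set c : Fin m → ℂ := u *ᵥ v with hc
    set cst : ℝ := 2 * M₀ - 2 * z.im * d ⟨k, hk⟩ with hcst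
    set φ : ℝ → ℝ := fun t => (star (w t z *ᵥ c) ⬝ᵥ (Jk m k *ᵥ (w t z *ᵥ c))).re with hφ
    set φ' : ℝ → ℝ := fun x => (star (A x *ᵥ (w x z *ᵥ c)) ⬝ᵥ (Jk m k *ᵥ (w x z *ᵥ c))
        + star (w x z *ᵥ c) ⬝ᵥ (Jk m k *ᵥ (A x *ᵥ (w x z *ᵥ c)))).re with hφ'
    have hφder : ∀ x ∈ Ici (0:ℝ), HasDerivWithinAt φ (φ' x) (Ici 0) x :=
      fun x hx => hasDerivWithinAt_qform (Jk m k) (hyder c x hx)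
    -- pointwise differential inequality
    have hpt : ∀ x ∈ Ici (0:ℝ), cst * φ x ≤ φ' x := by
      intro x hx
      set y := w x z *ᵥ c with hy
      have hφx : φ x = ∑ i : Fin m, (if (i:ℕ) < k then (1:ℝ) else -1) * Complex.normSq (y i) := by
        rw [hφ]
        simp only []
        rw [← hy, Jk_dot, Complex.ofReal_re]
      have hcj : (starRingEnd ℂ) (star y ⬝ᵥ (Jk m k *ᵥ (A x *ᵥ y)))
          = star (A x *ᵥ y) ⬝ᵥ (Jk m k *ᵥ y) := by
        rw [conj_dot, Matrix.star_mulVec (M := Jk m k), ← Matrix.dotProduct_mulVec, Jk_herm]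
      have hφ'x : φ' x = ((starRingEnd ℂ) (star y ⬝ᵥ (Jk m k *ᵥ (A x *ᵥ y)))
          + star y ⬝ᵥ (Jk m k *ᵥ (A x *ᵥ y))).re := by
        rw [hφ']
        simp only []
        rw [← hy, hcj]
      set T := star y ⬝ᵥ (Jk m k *ᵥ (A x *ᵥ y)) with hT
      rw [hφ'x, Complex.add_re, Complex.conj_re]
      -- decompose T
      have hTd : T = (Complex.I * z) • ((∑ i : Fin m, (if (i:ℕ) < k then (1:ℝ) else -1) * d i * Complex.normSq (y i) : ℝ) : ℂ)
          - star y ⬝ᵥ (Jk m k *ᵥ (ζ x *ᵥ y)) := by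
        rw [hT, hA]
        simp only []
        rw [Matrix.sub_mulVec, smul_mulVec, Matrix.mulVec_sub, Matrix.mulVec_smul,
          dotProduct_sub, dotProduct_smul, hD, JkD_dot d y]
      have hTre : T.re = (-z.im) * (∑ i : Fin m, (if (i:ℕ) < k then (1:ℝ) else -1) * d i * Complex.normSq (y i))
          - (star y ⬝ᵥ (Jk m k *ᵥ (ζ x *ᵥ y))).re := by
        rw [hTd, Complex.sub_re]
        congr 1
        simp [Complex.mul_re]
      have hζle : (star y ⬝ᵥ (Jk m k *ᵥ (ζ x *ᵥ y))).re ≤ M₀ * nsq y :=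
        re_dot_J_zeta_le (ζ x) M₀ hM₀.le (hζbdd x hx) y
      have hTlow : (-z.im) * (∑ i : Fin m, (if (i:ℕ) < k then (1:ℝ) else -1) * d i * Complex.normSq (y i))
          - M₀ * nsq y ≤ T.re := by
        rw [hTre]
        linarith
      -- termwise comparison
      have hterm : cst * (∑ i : Fin m, (if (i:ℕ) < k then (1:ℝ) else -1) * Complex.normSq (y i))
          ≤ ∑ i : Fin m, (2 * (-z.im) * ((if (i:ℕ) < k then (1:ℝ) else -1) * d i) - 2 * M₀) * Complex.normSq (y i) := by
        rw [Finset.mul_sum]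
        refine Finset.sum_le_sum fun i _ => ?_
        have hnS : (0:ℝ) ≤ Complex.normSq (y i) := Complex.normSq_nonneg _
        by_cases hik : (i:ℕ) < k
        · simp only [hik, if_true]
          have hdi : d ⟨k - 1, by omega⟩ ≤ d i := by
            refine hd.antitone ?_
            rw [Fin.le_def]
            simp
            omega
          have h2M : 2 * M₀ < Mk * (d ⟨k - 1, by omega⟩ - d ⟨k, hk⟩) := (div_lt_iff₀ hαβ).1 hMk
          have hMz : Mk * (d ⟨k - 1, by omega⟩ - d ⟨k, hk⟩) < (-z.im) * (d ⟨k - 1, by omega⟩ - d ⟨k, hk⟩) := by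
            have : Mk < -z.im := by linarith
            exact mul_lt_mul_of_pos_right this hαβ
          have hmono : (-z.im) * (d ⟨k - 1, by omega⟩ - d ⟨k, hk⟩) ≤ (-z.im) * (d i - d ⟨k, hk⟩) := by
            refine mul_le_mul_of_nonneg_left ?_ (by linarith)
            linarith
          have hcoeff : cst ≤ 2 * (-z.im) * (1 * d i) - 2 * M₀ := by
            rw [hcst]
            nlinarith
          calc cst * (1 * Complex.normSq (y i)) = cst * Complex.normSq (y i) := by ring
            _ ≤ (2 * (-z.im) * (1 * d i) - 2 * M₀) * Complex.normSq (y i) :=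
                mul_le_mul_of_nonneg_right hcoeff hnS
        · simp only [hik, if_false]
          have hdi : d i ≤ d ⟨k, hk⟩ := by
            refine hd.antitone ?_
            rw [Fin.le_def]
            simp
            omega
          have hzz : z.im * d ⟨k, hk⟩ ≤ z.im * d i := mul_le_mul_of_nonpos_left hdi hηneg.le
          have hcoeff : cst * (-1) ≤ 2 * (-z.im) * ((-1) * d i) - 2 * M₀ := by
            rw [hcst]
            nlinarith
          calc cst * ((-1) * Complex.normSq (y i)) = (cst * (-1)) * Complex.normSq (y i) := by ring
            _ ≤ (2 * (-z.im) * ((-1) * d i) - 2 * M₀) * Complex.normSq (y i) :=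
                mul_le_mul_of_nonneg_right hcoeff hnS
      -- combine
      have hsum2 : ∑ i : Fin m, (2 * (-z.im) * ((if (i:ℕ) < k then (1:ℝ) else -1) * d i) - 2 * M₀) * Complex.normSq (y i)
          = 2 * ((-z.im) * (∑ i : Fin m, (if (i:ℕ) < k then (1:ℝ) else -1) * d i * Complex.normSq (y i)) - M₀ * nsq y) := by
        rw [nsq, Finset.mul_sum, Finset.mul_sum, ← Finset.sum_sub_distrib, Finset.mul_sum]
        refine Finset.sum_congr rfl fun i _ => ?_
        ring
      rw [hφx]
      calc cst * (∑ i : Fin m, (if (i:ℕ) < k then (1:ℝ) else -1) * Complex.normSq (y i))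
          ≤ 2 * ((-z.im) * (∑ i : Fin m, (if (i:ℕ) < k then (1:ℝ) else -1) * d i * Complex.normSq (y i)) - M₀ * nsq y) := by
            rw [← hsum2]; exact hterm
        _ ≤ 2 * T.re := by linarith
        _ = T.re + T.re := by ring
    -- Gronwall via monotonicity of exp(-cst t) * φ t
    have hgmono : MonotoneOn (fun t => Real.exp (-cst * t) * φ t) (Ici 0) := by
      refine mono_help (g' := fun x =>
          Real.exp (-cst * x) * (-cst) * φ x + Real.exp (-cst * x) * φ' x) ?_ ?_
      · intro x hx
        have hexp : HasDerivWithinAt (fun t => Real.exp (-cst * t)) (Real.exp (-cst * x) * (-cst)) (Ici 0) x := by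
          have h1 : HasDerivAt (fun t : ℝ => -cst * t) (-cst) x := by
            simpa using (hasDerivAt_id x).const_mul (-cst)
          exact (h1.exp).hasDerivWithinAt
        exact hexp.mul (hφder x hx)
      · intro x hx
        show 0 ≤ Real.exp (-cst * x) * (-cst) * φ x + Real.exp (-cst * x) * φ' x
        have h := hpt x hx
        have e := (Real.exp_pos (-cst * x)).le
        have h2 := mul_le_mul_of_nonneg_left h e
        have h3 : Real.exp (-cst * x) * (-cst) * φ x + Real.exp (-cst * x) * (cst * φ x) = 0 := by
          ring
        linarith
    have hle := hgmono (self_mem_Ici) hx₀ hx₀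
    have hg0 : Real.exp (-cst * 0) * φ 0 = φ 0 := by simp
    have hφ0 : φ 0 = (star c ⬝ᵥ (Jk m k *ᵥ c)).re := by
      rw [hφ]
      simp only [hw0, Matrix.one_mulVec]
    have hφx₀ : φ x₀ ≤ 0 := by
      have hyx₀ : w x₀ z *ᵥ c = Q *ᵥ v := by
        rw [hc, Matrix.mulVec_mulVec, hwu]
      have hQ2' := hQ2.dotProduct_mulVec_nonneg v
      have e2 : star v ⬝ᵥ ((-(Qᴴ * Jk m k * Q)) *ᵥ v) = -(star (Q *ᵥ v) ⬝ᵥ (Jk m k *ᵥ (Q *ᵥ v))) := by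
        rw [Matrix.neg_mulVec, dotProduct_neg]
        congr 1
        rw [Matrix.mul_assoc, ← Matrix.mulVec_mulVec, ← Matrix.mulVec_mulVec, dot_conjT_mulVec]
      rw [e2] at hQ2'
      have ht : star (Q *ᵥ v) ⬝ᵥ (Jk m k *ᵥ (Q *ᵥ v)) ≤ 0 := neg_nonneg.1 hQ2'
      have hre := (Complex.le_def.1 ht).1
      simp only [Complex.zero_re] at hre
      rw [hφ]
      simp only [hyx₀]
      exact hre
    have hfin : φ 0 ≤ 0 := by
      have h1 : Real.exp (-cst * x₀) * φ x₀ ≤ 0 :=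
        mul_nonpos_of_nonneg_of_nonpos (Real.exp_pos _).le hφx₀
      calc φ 0 = Real.exp (-cst * 0) * φ 0 := hg0.symm
        _ ≤ Real.exp (-cst * x₀) * φ x₀ := hle
        _ ≤ 0 := h1
    rw [hφ0] at hfin
    exact hfin
  -- reduction to submatrices
  set a : Matrix (Fin k) (Fin (m - k)) ℂ := u.submatrix (Fin.castLE hk.le) id with ha
  set b : Matrix (Fin (m - k)) (Fin (m - k)) ℂ := u.submatrix (lowEmb k) id with hb
  have key2 : ∀ v : Fin (m - k) → ℂ, nsq (a *ᵥ v) ≤ nsq (b *ᵥ v) := by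
    intro v
    have e1 : star (u *ᵥ v) ⬝ᵥ (Jk m k *ᵥ (u *ᵥ v))
        = ((nsq (a *ᵥ v) - nsq (b *ᵥ v) : ℝ) : ℂ) := by
      rw [← dot_conjT_mulVec u v (Jk m k *ᵥ (u *ᵥ v)), Matrix.mulVec_mulVec,
        Matrix.mulVec_mulVec, uJu_split hk.le u, ← ha, ← hb, Matrix.sub_mulVec, dotProduct_sub,
        ← Matrix.mulVec_mulVec (v:=v) (M:=aᴴ) (N:=a), ← Matrix.mulVec_mulVec (v:=v) (M:=bᴴ) (N:=b),
        dot_conjT_mulVec, dot_conjT_mulVec, dot_star_self, dot_star_self]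
      push_cast; ring
    have := key v
    rw [e1] at this
    simp only [Complex.ofReal_re] at this
    linarith
  have hrank : ∀ v : Fin (m - k) → ℂ, u *ᵥ v = 0 → v = 0 := by
    intro v huv
    by_contra hv0
    have hQv : Q *ᵥ v = 0 := by
      rw [← hwu, ← Matrix.mulVec_mulVec, huv, Matrix.mulVec_zero]
    have := hQ1.dotProduct_mulVec_pos hv0
    rw [show (Qᴴ * Q) *ᵥ v = Qᴴ *ᵥ (Q *ᵥ v) from (Matrix.mulVec_mulVec _ _ _).symm,
      dot_conjT_mulVec, hQv] at this
    simp at this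
  -- (1) invertibility of b
  have hbunit : IsUnit b := by
    rw [Matrix.isUnit_iff_isUnit_det, isUnit_iff_ne_zero]
    intro hdet0
    obtain ⟨v, hv0, hbv⟩ := (Matrix.exists_mulVec_eq_zero_iff).2 hdet0
    have hav : a *ᵥ v = 0 := by
      refine nsq_eq_zero ?_
      have := key2 v
      rw [hbv] at this
      simpa [nsq] using this
    have hcompa : ∀ r : Fin k, (a *ᵥ v) r = (u *ᵥ v) (Fin.castLE hk.le r) := by
      intro r
      simp [ha, Matrix.mulVec, dotProduct, Matrix.submatrix_apply]
    have hcompb : ∀ r : Fin (m - k), (b *ᵥ v) r = (u *ᵥ v) (lowEmb k r) := by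
      intro r
      simp [hb, Matrix.mulVec, dotProduct, Matrix.submatrix_apply]
    have huv : u *ᵥ v = 0 := by
      funext i
      by_cases hik : (i : ℕ) < k
      · have h1 := hcompa ⟨i.1, hik⟩
        rw [hav] at h1
        have h2 : Fin.castLE hk.le ⟨i.1, hik⟩ = i := by ext; rfl
        rw [h2] at h1
        exact h1.symm
      · have hik2 : (i : ℕ) - k < m - k := by omega
        have h1 := hcompb ⟨i.1 - k, hik2⟩
        rw [hbv] at h1
        have h2 : lowEmb k ⟨i.1 - k, hik2⟩ = i := by
          ext; simp only [lowEmb]; omega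
        rw [h2] at h1
        exact h1.symm
    exact hv0 (hrank v huv)
  have hbdet : IsUnit b.det := (Matrix.isUnit_iff_isUnit_det b).1 hbunit
  set ψ : Matrix (Fin k) (Fin (m - k)) ℂ := a * b⁻¹ with hψ
  -- (2)
  have hPSD : ((1 : Matrix (Fin (m - k)) (Fin (m - k)) ℂ) - ψᴴ * ψ).PosSemidef := by
    refine Matrix.PosSemidef.of_dotProduct_mulVec_nonneg ?_ ?_
    · simp [Matrix.IsHermitian, Matrix.conjTranspose_sub, Matrix.conjTranspose_mul]
    · intro v
      have e1 : star v ⬝ᵥ (((1 : Matrix (Fin (m - k)) (Fin (m - k)) ℂ) - ψᴴ * ψ) *ᵥ v)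
          = ((nsq v - nsq (ψ *ᵥ v) : ℝ) : ℂ) := by
        rw [Matrix.sub_mulVec, dotProduct_sub, Matrix.one_mulVec,
          show (ψᴴ * ψ) *ᵥ v = ψᴴ *ᵥ (ψ *ᵥ v) from (Matrix.mulVec_mulVec _ _ _).symm,
          dot_conjT_mulVec, dot_star_self, dot_star_self]
        push_cast; ring
      rw [e1]
      rw [Complex.zero_le_real]
      have e2 : ψ *ᵥ v = a *ᵥ (b⁻¹ *ᵥ v) := by rw [Matrix.mulVec_mulVec]
      have e3 : b *ᵥ (b⁻¹ *ᵥ v) = v := by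
        rw [Matrix.mulVec_mulVec, Matrix.mul_nonsing_inv _ hbdet, Matrix.one_mulVec]
      have := key2 (b⁻¹ *ᵥ v)
      rw [e3] at this
      rw [e2]
      linarith
  refine ⟨hbunit, hPSD, ?_⟩
  rw [show ((colExt ψ)ᴴ * Jk m k * colExt ψ) = ψᴴ * ψ - 1 from colExt_J hk ψ, neg_sub]
  exact hPSD
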